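/- arXiv:2408.15709 — 2 statements merged into one kernel-verified Lean document; each statement's English description precedes it below -/
import Mathlib

section
/- Let D = (A, B, α, β) and D' = (A', B', α', β') be exact couples (exact sequences A →2 A →α B →β A →2 A with α∘β = 2, and similarly for D'). A morphism D → D' is a pair (f₁ : A → A', f₂ : B → B') commuting with all structure maps. Then the kernel of the forgetful map Hom(D, D') → Hom(A, A'), (f₁,f₂) ↦ f₁, is naturally isomorphic to Hom(A₂, A'/2A'). -/
open CategoryTheory

/-- `Ext¹_ℤ(A, B)` as an object of `ModuleCat ℤ`. -/
noncomputable abbrev Ext1 (A B : Type) [AddCommGroup A] [AddCommGroup B] : ModuleCat ℤ :=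
  ((Ext ℤ (ModuleCat.{0} ℤ) 1).obj (Opposite.op (ModuleCat.of ℤ A))).obj (ModuleCat.of ℤ B)

/-- The map induced on `Ext¹` in the second (covariant) variable by `g : B →+ B'`. -/
noncomputable def Ext1.mapRight (A : Type) [AddCommGroup A] {B B' : Type} [AddCommGroup B]
    [AddCommGroup B'] (g : B →+ B') : Ext1 A B ⟶ Ext1 A B' :=
  ((Ext ℤ (ModuleCat.{0} ℤ) 1).obj (Opposite.op (ModuleCat.of ℤ A))).map
    (ModuleCat.ofHom g.toIntLinearMap)

/-- The map induced on `Ext¹` in the first (contravariant) variable by `f : A' →+ A`. -/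
noncomputable def Ext1.mapLeft {A A' : Type} [AddCommGroup A] [AddCommGroup A']
    (f : A' →+ A) (B : Type) [AddCommGroup B] : Ext1 A B ⟶ Ext1 A' B :=
  ((Ext ℤ (ModuleCat.{0} ℤ) 1).map
    ((ModuleCat.ofHom f.toIntLinearMap : ModuleCat.of ℤ A' ⟶ ModuleCat.of ℤ A).op)).app
    (ModuleCat.of ℤ B)

/-- Multiplication by `n` as an additive homomorphism. -/
def smulHom (n : ℤ) (A : Type) [AddCommGroup A] : A →+ A :=
  AddMonoidHom.mk' (fun a => n • a) (fun a b => smul_add n a b)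

/-- The subgroup `nA` of an abelian group `A`. -/
abbrev nSub (n : ℤ) (A : Type) [AddCommGroup A] : AddSubgroup A := (smulHom n A).range

/-- The subgroup `2A`. -/
abbrev twoSub (A : Type) [AddCommGroup A] : AddSubgroup A := nSub 2 A

/-- The 2-torsion subgroup `A₂`. -/
abbrev tor2 (A : Type) [AddCommGroup A] : AddSubgroup A := (smulHom 2 A).ker

lemma twoSub_le_comap {B B' : Type} [AddCommGroup B] [AddCommGroup B'] (g : B →+ B') :
    twoSub B ≤ (twoSub B').comap g := by
  rintro x ⟨y, rfl⟩
  exact ⟨g y, by simp [smulHom]⟩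

/-- The map `B/2B → B'/2B'` induced by `g : B →+ B'`. -/
def qmap2 {B B' : Type} [AddCommGroup B] [AddCommGroup B'] (g : B →+ B') :
    B ⧸ twoSub B →+ B' ⧸ twoSub B' :=
  QuotientAddGroup.map (twoSub B) (twoSub B') g (twoSub_le_comap g)

/-- The map `A₂ → B₂` induced on 2-torsion subgroups by `f : A →+ B`. -/
def torMap {A B : Type} [AddCommGroup A] [AddCommGroup B] (f : A →+ B) :
    ↥(tor2 A) →+ ↥(tor2 B) :=
  AddMonoidHom.codRestrict (f.comp (tor2 A).subtype) (tor2 B) (by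
    rintro ⟨x, hx⟩
    have hx' : (2 : ℤ) • x = 0 := hx
    show (2 : ℤ) • f x = 0
    rw [← map_zsmul f 2 x, hx', map_zero])

/-- The subgroup of maps `f₂ : B →+ B'` which together with `f₁ = 0` form a morphism of exact
couples, i.e. `f₂ ∘ α = 0` and `β' ∘ f₂ = 0`: the kernel of the forgetful map. -/
def forgetKer {A B A' B' : Type} [AddCommGroup A] [AddCommGroup B] [AddCommGroup A']
    [AddCommGroup B'] (α : A →+ B) (β' : B' →+ A') : AddSubgroup (B →+ B') where
  carrier := {f₂ | f₂.comp α = 0 ∧ β'.comp f₂ = 0}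
  zero_mem' := by constructor <;> ext x <;> simp
  add_mem' := by
    rintro p q ⟨hp1, hp2⟩ ⟨hq1, hq2⟩
    refine ⟨?_, ?_⟩
    · show (p + q).comp α = 0
      rw [AddMonoidHom.add_comp, hp1, hq1, add_zero]
    · show β'.comp (p + q) = 0
      rw [AddMonoidHom.comp_add, hp2, hq2, add_zero]
  neg_mem' := by
    rintro p ⟨hp1, hp2⟩
    refine ⟨?_, ?_⟩
    · show (-p).comp α = 0
      ext x
      have h := congrFun (congrArg DFunLike.coe hp1) x
      simp only [AddMonoidHom.comp_apply] at h ⊢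
      simp [h]
    · show β'.comp (-p) = 0
      ext x
      have h := congrFun (congrArg DFunLike.coe hp2) x
      simp only [AddMonoidHom.comp_apply] at h ⊢
      simp [h]

/-- For exact couples `D = (A, B, α, β)` and `D' = (A', B', α', β')`, the
kernel of the forgetful map `Hom(D, D') → Hom(A, A')`, `(f₁, f₂) ↦ f₁`, is isomorphic to
`Hom(A₂, A'/2A')`. -/
theorem forget_kernel_iso (A B A' B' : Type) [AddCommGroup A] [AddCommGroup B]
    [AddCommGroup A'] [AddCommGroup B']
    (α : A →+ B) (β : B →+ A) (α' : A' →+ B') (β' : B' →+ A')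
    (h1 : α.ker = twoSub A) (h2 : α.range = β.ker) (h3 : β.range = tor2 A)
    (h4 : ∀ b : B, α (β b) = (2 : ℤ) • b)
    (h1' : α'.ker = twoSub A') (h2' : α'.range = β'.ker) (h3' : β'.range = tor2 A')
    (h4' : ∀ b : B', α' (β' b) = (2 : ℤ) • b) :
    Nonempty (↥(forgetKer α β') ≃+ (↥(tor2 A) →+ (A' ⧸ twoSub A'))) := by
  classical
  let eβ : (B ⧸ β.ker) ≃+ ↥(tor2 A) :=
    (QuotientAddGroup.quotientKerEquivRange β).trans (AddEquiv.addSubgroupCongr h3)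
  let eα' : (A' ⧸ twoSub A') ≃+ ↥(α'.range) :=
    (QuotientAddGroup.quotientAddEquivOfEq h1'.symm).trans
      (QuotientAddGroup.quotientKerEquivRange α')
  have heβ : ∀ b : B, ((eβ (QuotientAddGroup.mk b) : ↥(tor2 A)) : A) = β b := fun b => rfl
  have heα' : ∀ a' : A', (eα' (QuotientAddGroup.mk a')).1 = α' a' :=
    fun a' => rfl
  have hmem : ∀ f₂ : ↥(forgetKer α β'), ∀ b : B, (f₂ : B →+ B') b ∈ α'.range := by
    intro f₂ b
    have h := f₂.2.2
    have hb : β' ((f₂ : B →+ B') b) = 0 := by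
      have := congrFun (congrArg DFunLike.coe h) b
      simpa using this
    rw [h2']
    exact hb
  let ψ : ↥(forgetKer α β') → (B →+ (A' ⧸ twoSub A')) := fun f₂ =>
    eα'.symm.toAddMonoidHom.comp
      (AddMonoidHom.codRestrict (f₂ : B →+ B') α'.range (hmem f₂))
  have hψ : ∀ f₂, ∀ b : B, ψ f₂ b = eα'.symm ⟨(f₂ : B →+ B') b, hmem f₂ b⟩ := fun _ _ => rfl
  have hψker : ∀ f₂, ∀ b ∈ β.ker, ψ f₂ b = 0 := by
    intro f₂ b hb
    have hb' : b ∈ α.range := by rw [h2]; exact hb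
    obtain ⟨a, rfl⟩ := hb'
    have hz : (f₂ : B →+ B') (α a) = 0 := by
      have := congrFun (congrArg DFunLike.coe f₂.2.1) a
      simpa using this
    rw [hψ]
    have : (⟨(f₂ : B →+ B') (α a), hmem f₂ (α a)⟩ : ↥(α'.range)) = 0 := Subtype.ext hz
    rw [this, map_zero]
  let F : ↥(forgetKer α β') → (↥(tor2 A) →+ (A' ⧸ twoSub A')) := fun f₂ =>
    (QuotientAddGroup.lift β.ker (ψ f₂) (hψker f₂)).comp eβ.symm.toAddMonoidHom
  let G0 : (↥(tor2 A) →+ (A' ⧸ twoSub A')) → (B →+ B') := fun φ =>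
    (α'.range.subtype.comp eα'.toAddMonoidHom).comp
      ((φ.comp eβ.toAddMonoidHom).comp (QuotientAddGroup.mk' β.ker))
  have hG0 : ∀ φ b, G0 φ b = (eα' (φ (eβ ((QuotientAddGroup.mk' β.ker) b)))).1 := fun _ _ => rfl
  have hGmem : ∀ φ, G0 φ ∈ forgetKer α β' := by
    intro φ
    constructor
    · ext a
      have hk : (QuotientAddGroup.mk' β.ker) (α a) = 0 := by
        show (QuotientAddGroup.mk (α a) : B ⧸ β.ker) = 0
        rw [QuotientAddGroup.eq_zero_iff]
        rw [← h2]
        exact ⟨a, rfl⟩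
      show G0 φ (α a) = 0
      rw [hG0, hk, map_zero, map_zero, map_zero]
      rfl
    · ext b
      show β' (G0 φ b) = 0
      have hr : G0 φ b ∈ α'.range := (eα' (φ (eβ (QuotientAddGroup.mk b)))).2
      rw [h2'] at hr
      exact hr
  let G : (↥(tor2 A) →+ (A' ⧸ twoSub A')) → ↥(forgetKer α β') := fun φ => ⟨G0 φ, hGmem φ⟩
  have hF : ∀ f₂ b, F f₂ (eβ ((QuotientAddGroup.mk' β.ker) b)) = ψ f₂ b := by
    intro f₂ b
    show QuotientAddGroup.lift β.ker (ψ f₂) (hψker f₂) (eβ.symm (eβ _)) = _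
    rw [eβ.symm_apply_apply]
    rfl
  refine ⟨{ toFun := F, invFun := G, left_inv := ?_, right_inv := ?_, map_add' := ?_ }⟩
  · intro f₂
    apply Subtype.ext
    ext b
    show G0 (F f₂) b = (f₂ : B →+ B') b
    rw [hG0, hF, hψ, eα'.apply_symm_apply]
  · intro φ
    ext a
    obtain ⟨x, hx⟩ := eβ.surjective a
    obtain ⟨b, rfl⟩ := QuotientAddGroup.mk'_surjective β.ker x
    show F (G φ) a = φ a
    rw [← hx]
    rw [hF, hψ]
    have : (⟨(G0 φ) b, hmem (G φ) b⟩ : ↥(α'.range)) =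
        eα' (φ (eβ ((QuotientAddGroup.mk' β.ker) b))) :=
      Subtype.ext (hG0 φ b)
    rw [this, eα'.symm_apply_apply]
  · intro f g
    ext a
    obtain ⟨x, hx⟩ := eβ.surjective a
    obtain ⟨b, rfl⟩ := QuotientAddGroup.mk'_surjective β.ker x
    rw [← hx, AddMonoidHom.add_apply, hF, hF, hF, hψ, hψ, hψ]
    rw [← map_add]
    exact congrArg _ (Subtype.ext rfl)
end

section
/- Let D = (A, B, α, β) and D' = (A', B', α', β') be exact couples with α∘β = 2 and α'∘β' = 2. Then there is a short exact sequence 0 → Hom(A₂, A'/2A') → Hom_{𝒟}(D, D') → Hom(A, A') where the last map is (f₁, f₂) ↦ f₁; moreover the image of the forgetful map consists of all f₁ : A → A' that admit a compatible f₂. -/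
open CategoryTheory

/-- The group of morphisms of exact couples `D = (A, B, α, β) → D' = (A', B', α', β')`:
pairs `(f₁, f₂)` commuting with the structure maps. -/
def coupleHom {A B A' B' : Type} [AddCommGroup A] [AddCommGroup B] [AddCommGroup A']
    [AddCommGroup B'] (α : A →+ B) (β : B →+ A) (α' : A' →+ B') (β' : B' →+ A') :
    AddSubgroup ((A →+ A') × (B →+ B')) where
  carrier := {p | p.2.comp α = α'.comp p.1 ∧ β'.comp p.2 = p.1.comp β}
  zero_mem' := by constructor <;> ext x <;> simp
  add_mem' := by
    rintro p q ⟨hp1, hp2⟩ ⟨hq1, hq2⟩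
    refine ⟨?_, ?_⟩
    · show (p.2 + q.2).comp α = α'.comp (p.1 + q.1)
      rw [AddMonoidHom.add_comp, AddMonoidHom.comp_add, hp1, hq1]
    · show β'.comp (p.2 + q.2) = (p.1 + q.1).comp β
      rw [AddMonoidHom.comp_add, AddMonoidHom.add_comp, hp2, hq2]
  neg_mem' := by
    rintro p ⟨hp1, hp2⟩
    refine ⟨?_, ?_⟩
    · show (-p.2).comp α = α'.comp (-p.1)
      ext x
      have h := congrFun (congrArg DFunLike.coe hp1) x
      simp only [AddMonoidHom.comp_apply] at h ⊢
      simp [h]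
    · show β'.comp (-p.2) = (-p.1).comp β
      ext x
      have h := congrFun (congrArg DFunLike.coe hp2) x
      simp only [AddMonoidHom.comp_apply] at h ⊢
      simp [h]

/-- The forgetful map `Hom(D, D') → Hom(A, A')`, `(f₁, f₂) ↦ f₁`. -/
def coupleHomForget {A B A' B' : Type} [AddCommGroup A] [AddCommGroup B] [AddCommGroup A']
    [AddCommGroup B'] (α : A →+ B) (β : B →+ A) (α' : A' →+ B') (β' : B' →+ A') :
    ↥(coupleHom α β α' β') →+ (A →+ A') :=
  (AddMonoidHom.fst (A →+ A') (B →+ B')).comp (coupleHom α β α' β').subtype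

/-- For exact couples `D` and `D'` there is a short exact sequence
`0 → Hom(A₂, A'/2A') → Hom_𝒟(D, D') → Hom(A, A')`, where the last map is the forgetful map
`(f₁, f₂) ↦ f₁`, whose image consists of exactly those `f₁` admitting a compatible `f₂`. -/
theorem coupleHom_short_exact (A B A' B' : Type) [AddCommGroup A] [AddCommGroup B]
    [AddCommGroup A'] [AddCommGroup B']
    (α : A →+ B) (β : B →+ A) (α' : A' →+ B') (β' : B' →+ A')
    (h1 : α.ker = twoSub A) (h2 : α.range = β.ker) (h3 : β.range = tor2 A)
    (h4 : ∀ b : B, α (β b) = (2 : ℤ) • b)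
    (h1' : α'.ker = twoSub A') (h2' : α'.range = β'.ker) (h3' : β'.range = tor2 A')
    (h4' : ∀ b : B', α' (β' b) = (2 : ℤ) • b) :
    ∃ j : (↥(tor2 A) →+ (A' ⧸ twoSub A')) →+ ↥(coupleHom α β α' β'),
      Function.Injective j ∧
      j.range = (coupleHomForget α β α' β').ker ∧
      ∀ f₁ : A →+ A', f₁ ∈ (coupleHomForget α β α' β').range ↔
        ∃ f₂ : B →+ B', f₂.comp α = α'.comp f₁ ∧ β'.comp f₂ = f₁.comp β := by
  classical
  -- β corestricted to the 2-torsion subgroup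
  have hβmem : ∀ b : B, β b ∈ tor2 A := fun b => h3 ▸ ⟨b, rfl⟩
  set βt : B →+ ↥(tor2 A) := AddMonoidHom.codRestrict β (tor2 A) hβmem with hβt
  have hβt_surj : Function.Surjective βt := by
    rintro ⟨a, ha⟩
    have : a ∈ β.range := h3 ▸ ha
    obtain ⟨b, hb⟩ := this
    exact ⟨b, Subtype.ext hb⟩
  -- α' descends to an injective map A'/2A' → B'
  have hker' : ∀ a' ∈ twoSub A', α' a' = 0 := by
    intro a' ha'
    have : a' ∈ α'.ker := h1' ▸ ha'
    exact this
  set q : A' →+ A' ⧸ twoSub A' := QuotientAddGroup.mk' (twoSub A') with hq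
  set αbar : (A' ⧸ twoSub A') →+ B' :=
    QuotientAddGroup.lift (twoSub A') α' hker' with hαbar
  have hαbar_q : ∀ a', αbar (q a') = α' a' := fun a' => rfl
  have hαbar_inj : Function.Injective αbar := by
    intro x y hxy
    obtain ⟨a₁, rfl⟩ := QuotientAddGroup.mk'_surjective (twoSub A') x
    obtain ⟨a₂, rfl⟩ := QuotientAddGroup.mk'_surjective (twoSub A') y
    have : α' (a₁ - a₂) = 0 := by
      rw [map_sub, sub_eq_zero]
      exact hxy
    have hmem : a₁ - a₂ ∈ twoSub A' := h1' ▸ this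
    rw [← sub_eq_zero, ← map_sub]
    exact (QuotientAddGroup.eq_zero_iff _).mpr hmem
  -- the map j
  have hj2 : ∀ φ : ↥(tor2 A) →+ (A' ⧸ twoSub A'),
      ((0 : A →+ A'), αbar.comp (φ.comp βt)) ∈ coupleHom α β α' β' := by
    intro φ
    constructor
    · ext a
      have hαa : βt (α a) = 0 := by
        apply Subtype.ext
        have : α a ∈ β.ker := h2 ▸ ⟨a, rfl⟩
        exact this
      simp only [AddMonoidHom.comp_apply, hαa, map_zero, AddMonoidHom.zero_apply]
    · ext b
      obtain ⟨a', ha'⟩ := QuotientAddGroup.mk'_surjective (twoSub A') (φ (βt b))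
      simp only [AddMonoidHom.comp_apply, AddMonoidHom.zero_apply]
      rw [← ha', hαbar_q]
      have : α' a' ∈ β'.ker := h2' ▸ ⟨a', rfl⟩
      exact this
  set j : (↥(tor2 A) →+ (A' ⧸ twoSub A')) →+ ↥(coupleHom α β α' β') :=
    { toFun := fun φ => ⟨((0 : A →+ A'), αbar.comp (φ.comp βt)), hj2 φ⟩
      map_zero' := by
        apply Subtype.ext
        refine Prod.ext rfl ?_
        ext b; simp
      map_add' := by
        intro φ ψ
        apply Subtype.ext
        refine Prod.ext (by simp) ?_
        ext b
        simp } with hjdef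
  refine ⟨j, ?_, ?_, ?_⟩
  · -- injectivity
    intro φ ψ hφψ
    ext a
    obtain ⟨b, rfl⟩ := hβt_surj a
    have hval := congrArg Subtype.val hφψ
    have h2nd := congrArg Prod.snd hval
    have := congrFun (congrArg DFunLike.coe h2nd) b
    exact hαbar_inj this
  · -- kernel = image
    ext x
    constructor
    · rintro ⟨φ, rfl⟩
      show _ = (0 : A →+ A')
      rfl
    · intro hx
      have hx1 : (x : (A →+ A') × (B →+ B')).1 = 0 := hx
      obtain ⟨⟨f₁, f₂⟩, hc⟩ := x
      obtain ⟨hc1, hc2⟩ := hc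
      simp only at hx1
      subst hx1
      -- f₂ ∘ α = 0 and β' ∘ f₂ = 0
      have hfα : ∀ a, f₂ (α a) = 0 := by
        intro a
        have := congrFun (congrArg DFunLike.coe hc1) a
        simpa using this
      have hβf : ∀ b, β' (f₂ b) = 0 := by
        intro b
        have := congrFun (congrArg DFunLike.coe hc2) b
        simpa using this
      -- f₂ b lands in range α'
      have hmem : ∀ b : B, ∃ a', α' a' = f₂ b := by
        intro b
        have hbk : f₂ b ∈ α'.range := by rw [h2']; exact hβf b
        exact hbk
      choose lft hlft using hmem
      choose pick hpick using fun a => hβt_surj a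
      set φ0 : ↥(tor2 A) → A' ⧸ twoSub A' := fun a => q (lft (pick a)) with hφ0
      have key : ∀ (b : B) (a' : A'), α' a' = f₂ b → φ0 (βt b) = q a' := by
        intro b a' ha'
        have hsame : βt (pick (βt b)) = βt b := hpick (βt b)
        have hdiff : pick (βt b) - b ∈ β.ker := by
          have := congrArg (Subtype.val) hsame
          show β _ = 0
          rw [map_sub, sub_eq_zero]
          exact this
        have : pick (βt b) - b ∈ α.range := h2 ▸ hdiff
        obtain ⟨a, ha⟩ := this
        have hf2 : f₂ (pick (βt b)) = f₂ b := by
          have : f₂ (pick (βt b) - b) = 0 := by rw [← ha, hfα]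
          rw [map_sub, sub_eq_zero] at this
          exact this
        have : α' (lft (pick (βt b)) - a') = 0 := by
          rw [map_sub, hlft, ha', hf2, sub_self]
        have hm : lft (pick (βt b)) - a' ∈ twoSub A' := h1' ▸ this
        show q _ = q a'
        rw [← sub_eq_zero, ← map_sub]
        exact (QuotientAddGroup.eq_zero_iff _).mpr hm
      have hadd : ∀ a₁ a₂ : ↥(tor2 A), φ0 (a₁ + a₂) = φ0 a₁ + φ0 a₂ := by
        intro a₁ a₂
        obtain ⟨b₁, rfl⟩ := hβt_surj a₁
        obtain ⟨b₂, rfl⟩ := hβt_surj a₂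
        have h12 : α' (lft b₁ + lft b₂) = f₂ (b₁ + b₂) := by
          rw [map_add, hlft, hlft, map_add]
        calc φ0 (βt b₁ + βt b₂) = φ0 (βt (b₁ + b₂)) := by rw [map_add]
          _ = q (lft b₁ + lft b₂) := key _ _ h12
          _ = q (lft b₁) + q (lft b₂) := map_add _ _ _
          _ = φ0 (βt b₁) + φ0 (βt b₂) := by
              rw [key b₁ (lft b₁) (hlft b₁), key b₂ (lft b₂) (hlft b₂)]
      refine ⟨AddMonoidHom.mk' φ0 hadd, ?_⟩
      apply Subtype.ext
      refine Prod.ext rfl ?_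
      ext b
      show αbar (φ0 (βt b)) = f₂ b
      rw [key b (lft b) (hlft b), hαbar_q, hlft]
  · -- image of forgetful map
    intro f₁
    constructor
    · rintro ⟨⟨⟨g₁, g₂⟩, hg1, hg2⟩, rfl⟩
      exact ⟨g₂, hg1, hg2⟩
    · rintro ⟨f₂, hc1, hc2⟩
      exact ⟨⟨(f₁, f₂), hc1, hc2⟩, rfl⟩
end
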